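/- Let G be a locally finite game of finite rank with Sprague-Grundy value 𝒢(G) = m ∈ ℕ. Then G is equivalent to *m, the nim heap of size m. -/
import Mathlib


open scoped Classical

universe u

/-- `PosP Γ n` is the set `Pₙ` of positions from which the second player can win
within `n` rounds: `P₀` is the set of terminal positions, and
`Pₙ₊₁ = {x : every option of x has an option in Pₙ}`. -/
def PosP {V : Type*} (Γ : V → Finset V) : ℕ → Set V
  | 0 => {x | Γ x = ∅}
  | n + 1 => {x | ∀ y ∈ Γ x, ∃ z ∈ Γ y, z ∈ PosP Γ n}

/-- `PosN Γ n` is the set `Nₙ`: for `n ≥ 1`, `Nₙ = {x : some option of x lies in Pₙ₋₁}`. -/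
def PosN {V : Type*} (Γ : V → Finset V) : ℕ → Set V
  | 0 => ∅
  | n + 1 => {x | ∃ y ∈ Γ x, y ∈ PosP Γ n}

/-- The P-positions `𝒫 = ⋃ₙ Pₙ` (second player wins). -/
def PPos {V : Type*} (Γ : V → Finset V) : Set V := ⋃ n, PosP Γ n

/-- The N-positions `𝒩 = ⋃ₙ Nₙ` (first player wins). -/
def NPos {V : Type*} (Γ : V → Finset V) : Set V := ⋃ n, PosN Γ n

/-- The D-positions `𝒟 = V ∖ (𝒫 ∪ 𝒩)` (draws). -/
def DPos {V : Type*} (Γ : V → Finset V) : Set V := (PPos Γ ∪ NPos Γ)ᶜ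

/-- The mex (least natural number not attained) of the values `g y`, `y ∈ s`. -/
noncomputable def mexF {V : Type*} (s : Finset V) (g : V → ℕ∞) : ℕ :=
  sInf {n : ℕ | ∀ y ∈ s, g y ≠ (n : ℕ∞)}

/-- The approximants `𝒢ₙ` of the extended Sprague-Grundy function. -/
noncomputable def Gfun {V : Type*} (Γ : V → Finset V) : ℕ → V → ℕ∞
  | 0 => fun x => if Γ x = ∅ then 0 else ⊤
  | n + 1 => fun x =>
      let m := mexF (Γ x) (Gfun Γ n)
      if ∀ y ∈ Γ x, Gfun Γ n y ≤ (m : ℕ∞) ∨ ∃ z ∈ Γ y, Gfun Γ n z = (m : ℕ∞)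
      then (m : ℕ∞) else ⊤

/-- `x` has finite rank with (finite) Sprague-Grundy value `m`:
`𝒢ₙ(x) = m` for all sufficiently large `n`. -/
def HasGVal {V : Type*} (Γ : V → Finset V) (x : V) (m : ℕ) : Prop :=
  ∃ n₀ : ℕ, ∀ n ≥ n₀, Gfun Γ n x = (m : ℕ∞)

/-- `x` has infinite rank: `𝒢ₙ(x) = ∞` for all `n`. -/
def InfiniteRank {V : Type*} (Γ : V → Finset V) (x : V) : Prop :=
  ∀ n : ℕ, Gfun Γ n x = ⊤

/-- The rank of `x`: the least `n` with `𝒢ₙ(x) < ∞`, or `∞` if there is none. -/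
noncomputable def rank {V : Type*} (Γ : V → Finset V) (x : V) : ℕ∞ :=
  sInf ((↑) '' {n : ℕ | Gfun Γ n x ≠ ⊤})

/-- For `x` of infinite rank, the set `𝒜` with `𝒢(x) = ∞(𝒜)`:
the set of finite Sprague-Grundy values of finite-rank options of `x`. -/
def ValSet {V : Type*} (Γ : V → Finset V) (x : V) : Set ℕ :=
  {a | ∃ y ∈ Γ x, HasGVal Γ y a}

/-- The graph of the disjunctive sum: move in exactly one coordinate. -/
noncomputable def sumGraph {V W : Type*} (Γ : V → Finset V) (Δ : W → Finset W) :
    V × W → Finset (V × W) := fun p =>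
  (Γ p.1).image (fun u => (u, p.2)) ∪ (Δ p.2).image (fun w => (p.1, w))

/-- Two (positions of possibly different) games lie in the same outcome class. -/
def SameOutcome {V W : Type*} (Γ : V → Finset V) (x : V) (Δ : W → Finset W) (y : W) : Prop :=
  (x ∈ PPos Γ ↔ y ∈ PPos Δ) ∧ (x ∈ NPos Γ ↔ y ∈ NPos Δ) ∧ (x ∈ DPos Γ ↔ y ∈ DPos Δ)

/-- Equivalence of games: `G + X` and `H + X` have the same outcome for every
locally finite game `X`. -/
def GameEquiv {V W : Type*} (Γ : V → Finset V) (x : V) (Δ : W → Finset W) (y : W) : Prop :=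
  ∀ (X : Type u) (Ξ : X → Finset X) (z : X),
    SameOutcome (sumGraph Γ Ξ) (x, z) (sumGraph Δ Ξ) (y, z)

/-- The nim heap `*m`: positions `0, …, m`, where from `k` one can move to any `j < k`. -/
def nimGraph (m : ℕ) : Fin (m + 1) → Finset (Fin (m + 1)) :=
  fun k => Finset.univ.filter (fun j => j < k)

/-- The reduced graph `R(V)`: the induced graph on the complement of the P-positions. -/
noncomputable def reducedGraph {V : Type*} (Γ : V → Finset V) :
    {x : V // x ∉ PPos Γ} → Finset {x : V // x ∉ PPos Γ} := fun x =>
  (Γ x.1).subtype (fun y => y ∉ PPos Γ)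

/-- The vertex set of `R^{(k)}(V)`: positions which do not have finite rank with
Sprague-Grundy value `< k`. -/
def RkSet {V : Type*} (Γ : V → Finset V) (k : ℕ) : Set V :=
  {x | ¬ ∃ m < k, HasGVal Γ x m}

/-- The induced game graph `R^{(k)}(V)` on `RkSet Γ k`. -/
noncomputable def RkGraph {V : Type*} (Γ : V → Finset V) (k : ℕ) :
    RkSet Γ k → Finset (RkSet Γ k) := fun x =>
  (Γ x.1).subtype (fun y => y ∈ RkSet Γ k)

/-- `V` is `k`-stable: every infinite-rank position `x`, with `𝒢(x) = ∞(𝒜)`,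
has `{0, 1, …, k} ⊆ 𝒜`. -/
def kStable {V : Type*} (Γ : V → Finset V) (k : ℕ) : Prop :=
  ∀ x, InfiniteRank Γ x → ∀ j ≤ k, j ∈ ValSet Γ x

/-- `l` is a directed walk from `o` to `x` in the graph `Γ`. -/
def IsWalk {V : Type*} (Γ : V → Finset V) (o x : V) (l : List V) : Prop :=
  l.head? = some o ∧ l.getLast? = some x ∧ l.Chain' (fun a b => b ∈ Γ a)

/-- `Γ` is a tree with root `o`: `o` has no incoming arcs, and every vertex is
reached from `o` by a unique directed walk. -/
def IsTree {V : Type*} (Γ : V → Finset V) (o : V) : Prop :=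
  (∀ x, o ∉ Γ x) ∧ ∀ x, ∃! l : List V, IsWalk Γ o x l

/-- `f` is a mex labelling: `f x` is the least natural number not attained by `f`
on the options of `x`, for every `x`. -/
def MexLabelling {V : Type*} (Γ : V → Finset V) (f : V → ℕ) : Prop :=
  ∀ x, f x = sInf {n : ℕ | ∀ y ∈ Γ x, f y ≠ n}


section Aux

variable {V : Type*}

lemma posP_succ_subset (Γ : V → Finset V) (n : ℕ) : PosP Γ n ⊆ PosP Γ (n+1) := by
  induction n with
  | zero => intro x hx; intro y hy; simp [PosP] at hx; simp [hx] at hy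
  | succ n ih =>
    intro x hx y hy
    obtain ⟨z, hz, hzp⟩ := hx y hy
    exact ⟨z, hz, ih hzp⟩

lemma posP_mono (Γ : V → Finset V) {a b : ℕ} (h : a ≤ b) : PosP Γ a ⊆ PosP Γ b := by
  induction b with
  | zero => simp_all
  | succ b ih =>
    rcases Nat.lt_or_ge a (b+1) with h' | h'
    · exact (ih (Nat.lt_succ_iff.mp h')).trans (posP_succ_subset Γ b)
    · have : a = b + 1 := le_antisymm h h'
      subst this; exact subset_rfl

lemma ppos_intro (Γ : V → Finset V) {p : V}
    (h : ∀ q ∈ Γ p, ∃ r ∈ Γ q, r ∈ PPos Γ) : p ∈ PPos Γ := by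
  have h' : ∀ q ∈ Γ p, ∃ n : ℕ, ∃ r ∈ Γ q, r ∈ PosP Γ n := by
    intro q hq
    obtain ⟨r, hr, hrp⟩ := h q hq
    obtain ⟨n, hn⟩ : ∃ n, r ∈ PosP Γ n := by
      simpa [PPos, Set.mem_iUnion] using hrp
    exact ⟨n, r, hr, hn⟩
  choose! f hf using h'
  refine Set.mem_iUnion.2 ⟨(Γ p).sup f + 1, ?_⟩
  intro q hq
  obtain ⟨r, hr, hrn⟩ := hf q hq
  exact ⟨r, hr, posP_mono Γ (Finset.le_sup hq) hrn⟩

lemma npos_intro (Γ : V → Finset V) {p q : V} (hq : q ∈ Γ p) (h : q ∈ PPos Γ) :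
    p ∈ NPos Γ := by
  obtain ⟨n, hn⟩ : ∃ n, q ∈ PosP Γ n := by simpa [PPos, Set.mem_iUnion] using h
  exact Set.mem_iUnion.2 ⟨n+1, q, hq, hn⟩

lemma npos_elim (Γ : V → Finset V) {p : V} (h : p ∈ NPos Γ) :
    ∃ q ∈ Γ p, q ∈ PPos Γ := by
  obtain ⟨n, hn⟩ : ∃ n, p ∈ PosN Γ n := by simpa [NPos, Set.mem_iUnion] using h
  cases n with
  | zero => simp [PosN] at hn
  | succ n =>
    obtain ⟨q, hq, hqp⟩ := hn
    exact ⟨q, hq, Set.mem_iUnion.2 ⟨n, hqp⟩⟩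

lemma mexF_nonempty (s : Finset V) (g : V → ℕ∞) :
    {n : ℕ | ∀ y ∈ s, g y ≠ (n : ℕ∞)}.Nonempty := by
  by_contra hc
  rw [Set.not_nonempty_iff_eq_empty] at hc
  have hall : ∀ n : ℕ, ∃ y ∈ s, g y = (n : ℕ∞) := by
    intro n
    by_contra h
    push_neg at h
    have : n ∈ {n : ℕ | ∀ y ∈ s, g y ≠ (n : ℕ∞)} := fun y hy => h y hy
    simp [hc] at this
  have hsub : Set.range (fun n : ℕ => (n : ℕ∞)) ⊆ ↑(s.image g) := by
    rintro _ ⟨n, rfl⟩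
    obtain ⟨y, hy, hgy⟩ := hall n
    simp only [Finset.coe_image, Set.mem_image]
    exact ⟨y, hy, hgy⟩
  exact (Set.infinite_range_of_injective (fun a b => by exact_mod_cast id))
    ((s.image g).finite_toSet.subset hsub)

lemma mexF_notMem (s : Finset V) (g : V → ℕ∞) :
    ∀ y ∈ s, g y ≠ (mexF s g : ℕ∞) :=
  Nat.sInf_mem (mexF_nonempty s g)

lemma mexF_lt (s : Finset V) (g : V → ℕ∞) {j : ℕ} (hj : j < mexF s g) :
    ∃ y ∈ s, g y = (j : ℕ∞) := by
  have := Nat.notMem_of_lt_sInf hj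
  simp only [Set.mem_setOf_eq, not_forall] at this
  obtain ⟨y, hy, hgy⟩ := this
  exact ⟨y, hy, not_not.mp hgy⟩

end Aux


section GfunAux

variable {V : Type*} {Γ : V → Finset V}

lemma gfun_empty (h : Γ = Γ) {x : V} (hx : Γ x = ∅) : ∀ n, Gfun Γ n x = 0 := by
  intro n
  cases n with
  | zero => simp [Gfun, hx]
  | succ n =>
    have hm : mexF (Γ x) (Gfun Γ n) = 0 := by
      rw [hx]
      refine Nat.sInf_eq_zero.mpr (Or.inl ?_)
      simp
    simp only [Gfun]
    rw [hm, if_pos]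
    · simp
    · simp [hx]

lemma gfun_zero_eq {x : V} {k : ℕ} (h : Gfun Γ 0 x = (k : ℕ∞)) :
    Γ x = ∅ ∧ k = 0 := by
  by_cases hx : Γ x = ∅
  · refine ⟨hx, ?_⟩
    simp [Gfun, hx] at h
    exact_mod_cast h.symm
  · simp [Gfun, hx] at h

lemma gfun_succ_eq {x : V} {n k : ℕ} (h : Gfun Γ (n+1) x = (k : ℕ∞)) :
    k = mexF (Γ x) (Gfun Γ n) ∧
    ∀ y ∈ Γ x, Gfun Γ n y ≤ (k : ℕ∞) ∨ ∃ z ∈ Γ y, Gfun Γ n z = (k : ℕ∞) := by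
  by_cases hc : ∀ y ∈ Γ x, Gfun Γ n y ≤ (mexF (Γ x) (Gfun Γ n) : ℕ∞) ∨
      ∃ z ∈ Γ y, Gfun Γ n z = (mexF (Γ x) (Gfun Γ n) : ℕ∞)
  · have : Gfun Γ (n+1) x = (mexF (Γ x) (Gfun Γ n) : ℕ∞) := by
      simp only [Gfun]
      exact if_pos hc
    rw [this] at h
    have hk : mexF (Γ x) (Gfun Γ n) = k := by exact_mod_cast h
    subst hk
    exact ⟨rfl, hc⟩
  · have : Gfun Γ (n+1) x = ⊤ := by
      simp only [Gfun]
      exact if_neg hc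
    rw [this] at h
    exact absurd h.symm (by simp)

end GfunAux


section SumAux

variable {V W : Type*} {Γ : V → Finset V} {Δ : W → Finset W}

lemma mem_posP_zero {x : V} : x ∈ PosP Γ 0 ↔ Γ x = ∅ := Iff.rfl

lemma mem_posP_succ {x : V} {n : ℕ} :
    x ∈ PosP Γ (n+1) ↔ ∀ y ∈ Γ x, ∃ z ∈ Γ y, z ∈ PosP Γ n := Iff.rfl

lemma mem_posN_succ {x : V} {n : ℕ} :
    x ∈ PosN Γ (n+1) ↔ ∃ y ∈ Γ x, y ∈ PosP Γ n := Iff.rfl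

lemma mem_sumGraph {x : V} {z : W} {q : V × W} :
    q ∈ sumGraph Γ Δ (x, z) ↔ (∃ u ∈ Γ x, q = (u, z)) ∨ (∃ w ∈ Δ z, q = (x, w)) := by
  simp only [sumGraph, Finset.mem_union, Finset.mem_image]
  constructor
  · rintro (⟨u, hu, rfl⟩ | ⟨w, hw, rfl⟩)
    · exact Or.inl ⟨u, hu, rfl⟩
    · exact Or.inr ⟨w, hw, rfl⟩
  · rintro (⟨u, hu, rfl⟩ | ⟨w, hw, rfl⟩)
    · exact Or.inl ⟨u, hu, rfl⟩
    · exact Or.inr ⟨w, hw, rfl⟩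

lemma sumGraph_left {x : V} {z : W} {u : V} (h : u ∈ Γ x) :
    (u, z) ∈ sumGraph Γ Δ (x, z) :=
  mem_sumGraph.mpr (Or.inl ⟨u, h, rfl⟩)

lemma sumGraph_right {x : V} {z : W} {w : W} (h : w ∈ Δ z) :
    (x, w) ∈ sumGraph Γ Δ (x, z) :=
  mem_sumGraph.mpr (Or.inr ⟨w, h, rfl⟩)

lemma sumGraph_eq_empty {x : V} {z : W} :
    sumGraph Γ Δ (x, z) = ∅ ↔ Γ x = ∅ ∧ Δ z = ∅ := by
  simp [sumGraph, Finset.union_eq_empty, Finset.image_eq_empty]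

lemma mem_nimGraph {m : ℕ} {j k : Fin (m+1)} : j ∈ nimGraph m k ↔ j < k := by
  simp [nimGraph]

lemma nimGraph_zero_eq_empty {m : ℕ} {k : Fin (m+1)} (hk : (k : ℕ) = 0) :
    nimGraph m k = ∅ := by
  ext j
  simp only [mem_nimGraph, Finset.notMem_empty, iff_false]
  intro hj
  rw [Fin.lt_def, hk] at hj
  omega

lemma nimGraph_eq_empty_val {m : ℕ} {k : Fin (m+1)} (hk : nimGraph m k = ∅) :
    (k : ℕ) = 0 := by
  by_contra h
  have h0 : (⟨0, Nat.succ_pos m⟩ : Fin (m+1)) ∈ nimGraph m k := by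
    rw [mem_nimGraph, Fin.lt_def]
    show 0 < (k : ℕ)
    omega
  simp [hk] at h0

end SumAux


section Key

variable {V X : Type*} {Γ : V → Finset V} {Ξ : X → Finset X} {m : ℕ}

/-- helper: extract a finite value `j < k` from an option with `Gfun ≤ k`, `≠ k`. -/
lemma gfun_lt_of_le {y : V} {n' k : ℕ} (hle : Gfun Γ n' y ≤ (k : ℕ∞))
    (hne : Gfun Γ n' y ≠ (k : ℕ∞)) :
    ∃ j : ℕ, j < k ∧ Gfun Γ n' y = (j : ℕ∞) := by
  have hnt : Gfun Γ n' y ≠ ⊤ := by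
    intro ht
    rw [ht] at hle
    simp at hle
  have hj : (((Gfun Γ n' y).toNat : ℕ) : ℕ∞) = Gfun Γ n' y := ENat.coe_toNat hnt
  set j : ℕ := (Gfun Γ n' y).toNat with hjdef
  refine ⟨j, ?_, hj.symm⟩
  rw [← hj] at hle hne
  have h1 : j ≤ k := by exact_mod_cast hle
  have h2 : j ≠ k := by exact_mod_cast hne
  omega

lemma keyA : ∀ s a n (x : V) (k : Fin (m+1)) (z : X), a + n ≤ s →
    Gfun Γ n x = ((k : ℕ) : ℕ∞) →
    (k, z) ∈ PosP (sumGraph (nimGraph m) Ξ) a →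
    (x, z) ∈ PPos (sumGraph Γ Ξ) := by
  intro s
  induction s with
  | zero =>
    intro a n x k z hs hg hp
    obtain ⟨rfl, rfl⟩ : a = 0 ∧ n = 0 := by omega
    rw [mem_posP_zero, sumGraph_eq_empty] at hp
    have hx : Γ x = ∅ := (gfun_zero_eq hg).1
    exact Set.mem_iUnion.2 ⟨0, by rw [mem_posP_zero, sumGraph_eq_empty]; exact ⟨hx, hp.2⟩⟩
  | succ s ih =>
    intro a n x k z hs hg hp
    match a with
    | 0 =>
      rw [mem_posP_zero, sumGraph_eq_empty] at hp
      obtain ⟨hnim, hz⟩ := hp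
      have hk0 : (k : ℕ) = 0 := nimGraph_eq_empty_val hnim
      by_cases hx : Γ x = ∅
      · exact Set.mem_iUnion.2 ⟨0, by rw [mem_posP_zero, sumGraph_eq_empty]; exact ⟨hx, hz⟩⟩
      · match n with
        | 0 => exact absurd (gfun_zero_eq hg).1 hx
        | n' + 1 =>
          obtain ⟨hmex, hcond⟩ := gfun_succ_eq hg
          apply ppos_intro
          intro q hq
          rw [mem_sumGraph] at hq
          rcases hq with ⟨y, hy, rfl⟩ | ⟨w, hw, rfl⟩
          · rcases hcond y hy with hle | ⟨w, hw, hwv⟩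
            · exfalso
              have hne : Gfun Γ n' y ≠ (((k : ℕ)) : ℕ∞) := by
                rw [hmex]; exact mexF_notMem _ _ y hy
              obtain ⟨j, hj, _⟩ := gfun_lt_of_le hle hne
              omega
            · refine ⟨(w, z), sumGraph_left hw, ?_⟩
              refine ih 0 n' w k z (by omega) hwv ?_
              rw [mem_posP_zero, sumGraph_eq_empty]
              exact ⟨hnim, hz⟩
          · simp [hz] at hw
    | a + 1 =>
      rw [mem_posP_succ] at hp
      apply ppos_intro
      intro q hq
      rw [mem_sumGraph] at hq
      rcases hq with ⟨y, hy, rfl⟩ | ⟨z', hz', rfl⟩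
      · -- opponent moves in the Γ-component, x → y
        match n with
        | 0 =>
          have := (gfun_zero_eq hg).1
          simp [this] at hy
        | n' + 1 =>
          obtain ⟨hmex, hcond⟩ := gfun_succ_eq hg
          rcases hcond y hy with hle | ⟨w, hw, hwv⟩
          · -- y has a finite value j < k
            have hne : Gfun Γ n' y ≠ (((k : ℕ)) : ℕ∞) := by
              rw [hmex]; exact mexF_notMem _ _ y hy
            obtain ⟨j, hjk, hjv⟩ := gfun_lt_of_le hle hne
            have hjm : j < m + 1 := lt_trans hjk k.isLt
            set jf : Fin (m+1) := ⟨j, hjm⟩ with hjf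
            have hmem : (jf, z) ∈ sumGraph (nimGraph m) Ξ (k, z) :=
              sumGraph_left (mem_nimGraph.mpr (by rw [Fin.lt_def]; exact hjk))
            obtain ⟨r, hr, hrp⟩ := hp _ hmem
            rw [mem_sumGraph] at hr
            rcases hr with ⟨j', hj', rfl⟩ | ⟨z'', hz'', rfl⟩
            · -- nim reply j → j'
              have hj'j : (j' : ℕ) < j := by
                have := mem_nimGraph.mp hj'
                rwa [Fin.lt_def] at this
              match n' with
              | 0 =>
                have := (gfun_zero_eq hjv).2
                omega
              | n'' + 1 =>
                obtain ⟨hmexy, _⟩ := gfun_succ_eq hjv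
                obtain ⟨y', hy', hy'v⟩ := mexF_lt (Γ y) (Gfun Γ n'') (by rw [← hmexy]; exact hj'j)
                exact ⟨(y', z), sumGraph_left hy', ih a n'' y' j' z (by omega) hy'v hrp⟩
            · -- Ξ reply z → z''
              exact ⟨(y, z''), sumGraph_right hz'', ih a n' y jf z'' (by omega) hjv hrp⟩
          · -- y is reversible: reverse to w of value k
            exact ⟨(w, z), sumGraph_left hw,
              ih (a + 1) n' w k z (by omega) hwv (by rw [mem_posP_succ]; exact hp)⟩
      · -- opponent moves in the Ξ-component, z → z'
        have hmem : (k, z') ∈ sumGraph (nimGraph m) Ξ (k, z) := sumGraph_right hz'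
        obtain ⟨r, hr, hrp⟩ := hp _ hmem
        rw [mem_sumGraph] at hr
        rcases hr with ⟨j', hj', rfl⟩ | ⟨z'', hz'', rfl⟩
        · -- nim reply k → j'
          have hj'k : (j' : ℕ) < (k : ℕ) := by
            have := mem_nimGraph.mp hj'
            rwa [Fin.lt_def] at this
          match n with
          | 0 =>
            have := (gfun_zero_eq hg).2
            omega
          | n' + 1 =>
            obtain ⟨hmex, _⟩ := gfun_succ_eq hg
            obtain ⟨y', hy', hy'v⟩ := mexF_lt (Γ x) (Gfun Γ n') (by rw [← hmex]; exact hj'k)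
            exact ⟨(y', z'), sumGraph_left hy', ih a n' y' j' z' (by omega) hy'v hrp⟩
        · -- Ξ reply z' → z''
          exact ⟨(x, z''), sumGraph_right hz'', ih a n x k z'' (by omega) hg hrp⟩

lemma keyA2 {a n : ℕ} {x : V} {k : Fin (m+1)} {z : X}
    (hg : Gfun Γ n x = ((k : ℕ) : ℕ∞))
    (hp : (k, z) ∈ PosN (sumGraph (nimGraph m) Ξ) a) :
    (x, z) ∈ NPos (sumGraph Γ Ξ) := by
  match a with
  | 0 => simp [PosN] at hp
  | a + 1 =>
    rw [mem_posN_succ] at hp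
    obtain ⟨q, hq, hqp⟩ := hp
    rw [mem_sumGraph] at hq
    rcases hq with ⟨j, hj, rfl⟩ | ⟨z', hz', rfl⟩
    · have hjk : (j : ℕ) < (k : ℕ) := by
        have := mem_nimGraph.mp hj
        rwa [Fin.lt_def] at this
      match n with
      | 0 =>
        have := (gfun_zero_eq hg).2
        omega
      | n' + 1 =>
        obtain ⟨hmex, _⟩ := gfun_succ_eq hg
        obtain ⟨y, hy, hyv⟩ := mexF_lt (Γ x) (Gfun Γ n') (by rw [← hmex]; exact hjk)
        exact npos_intro _ (sumGraph_left hy)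
          (keyA (a + n') a n' y j z le_rfl hyv hqp)
    · exact npos_intro _ (sumGraph_right hz')
        (keyA (a + n) a n x k z' le_rfl hg hqp)

lemma keyB : ∀ s a n (x : V) (k : ℕ) (hkm : k < m + 1) (z : X), a + n ≤ s →
    Gfun Γ n x = (k : ℕ∞) →
    ((x, z) ∈ PosN (sumGraph Γ Ξ) a →
      ((⟨k, hkm⟩ : Fin (m+1)), z) ∈ NPos (sumGraph (nimGraph m) Ξ)) ∧
    ((x, z) ∈ PosP (sumGraph Γ Ξ) a →
      ((⟨k, hkm⟩ : Fin (m+1)), z) ∈ PPos (sumGraph (nimGraph m) Ξ)) := by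
  intro s
  induction s with
  | zero =>
    intro a n x k hkm z hs hg
    obtain ⟨rfl, rfl⟩ : a = 0 ∧ n = 0 := by omega
    constructor
    · intro hn; simp [PosN] at hn
    · intro hp
      rw [mem_posP_zero, sumGraph_eq_empty] at hp
      have hk0 : k = 0 := (gfun_zero_eq hg).2
      subst hk0
      refine Set.mem_iUnion.2 ⟨0, ?_⟩
      rw [mem_posP_zero, sumGraph_eq_empty]
      exact ⟨nimGraph_zero_eq_empty rfl, hp.2⟩
  | succ s ih =>
    have hB2 : ∀ a n (x : V) (k : ℕ) (hkm : k < m + 1) (z : X), a + n ≤ s + 1 →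
        Gfun Γ n x = (k : ℕ∞) →
        (x, z) ∈ PosN (sumGraph Γ Ξ) a →
        ((⟨k, hkm⟩ : Fin (m+1)), z) ∈ NPos (sumGraph (nimGraph m) Ξ) := by
      intro a n x k hkm z hs hg hN
      match a with
      | 0 => simp [PosN] at hN
      | c + 1 =>
        rw [mem_posN_succ] at hN
        obtain ⟨q, hq, hqp⟩ := hN
        rw [mem_sumGraph] at hq
        rcases hq with ⟨y, hy, rfl⟩ | ⟨z', hz', rfl⟩
        · match n with
          | 0 =>
            have := (gfun_zero_eq hg).1
            simp [this] at hy
          | n' + 1 =>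
            obtain ⟨hmex, hcond⟩ := gfun_succ_eq hg
            rcases hcond y hy with hle | ⟨w, hw, hwv⟩
            · have hne : Gfun Γ n' y ≠ ((k : ℕ) : ℕ∞) := by
                rw [hmex]; exact mexF_notMem _ _ y hy
              obtain ⟨j, hjk, hjv⟩ := gfun_lt_of_le hle hne
              have hjm : j < m + 1 := by omega
              have := (ih c n' y j hjm z (by omega) hjv).2 hqp
              exact npos_intro _
                (sumGraph_left (mem_nimGraph.mpr (by rw [Fin.lt_def]; exact hjk))) this
            · -- reversible: w ∈ Γ y with value k; (w,z) is an N-position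
              have hwN : (w, z) ∈ PosN (sumGraph Γ Ξ) c := by
                match c with
                | 0 =>
                  rw [mem_posP_zero, sumGraph_eq_empty] at hqp
                  simp [hqp.1] at hw
                | c' + 1 =>
                  rw [mem_posP_succ] at hqp
                  obtain ⟨r, hr, hrp⟩ := hqp _ (sumGraph_left hw)
                  exact mem_posN_succ.mpr ⟨r, hr, hrp⟩
              exact (ih c n' w k hkm z (by omega) hwv).1 hwN
        · exact npos_intro _ (sumGraph_right hz')
            ((ih c n x k hkm z' (by omega) hg).2 hqp)
    intro a n x k hkm z hs hg
    refine ⟨hB2 a n x k hkm z hs hg, ?_⟩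
    intro hP
    match a with
    | 0 =>
      rw [mem_posP_zero, sumGraph_eq_empty] at hP
      have hk0 : k = 0 := by
        have := gfun_empty rfl hP.1 n
        rw [hg] at this
        exact_mod_cast this
      subst hk0
      refine Set.mem_iUnion.2 ⟨0, ?_⟩
      rw [mem_posP_zero, sumGraph_eq_empty]
      exact ⟨nimGraph_zero_eq_empty rfl, hP.2⟩
    | c + 1 =>
      rw [mem_posP_succ] at hP
      apply ppos_intro
      intro q hq
      rw [mem_sumGraph] at hq
      rcases hq with ⟨jf, hjf, rfl⟩ | ⟨z', hz', rfl⟩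
      · -- opponent plays nim: k → jf
        have hjk : (jf : ℕ) < k := by
          have := mem_nimGraph.mp hjf
          rwa [Fin.lt_def] at this
        match n with
        | 0 =>
          have := (gfun_zero_eq hg).2
          omega
        | n' + 1 =>
          obtain ⟨hmex, _⟩ := gfun_succ_eq hg
          obtain ⟨y, hy, hyv⟩ := mexF_lt (Γ x) (Gfun Γ n') (by rw [← hmex]; exact hjk)
          have hyN : (y, z) ∈ PosN (sumGraph Γ Ξ) (c + 1) := by
            obtain ⟨r, hr, hrp⟩ := hP _ (sumGraph_left hy)
            exact mem_posN_succ.mpr ⟨r, hr, hrp⟩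
          have := hB2 (c + 1) n' y (jf : ℕ) jf.isLt z (by omega) hyv hyN
          rw [Fin.eta] at this
          obtain ⟨r, hr, hrp⟩ := npos_elim _ this
          exact ⟨r, hr, hrp⟩
      · -- opponent plays in Ξ: z → z'
        have hxN : (x, z') ∈ PosN (sumGraph Γ Ξ) (c + 1) := by
          obtain ⟨r, hr, hrp⟩ := hP _ (sumGraph_right hz')
          exact mem_posN_succ.mpr ⟨r, hr, hrp⟩
        have := hB2 (c + 1) n x k hkm z' hs hg hxN
        obtain ⟨r, hr, hrp⟩ := npos_elim _ this
        exact ⟨r, hr, hrp⟩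

end Key

/-- a locally finite game of finite rank with Sprague-Grundy value
`m` is equivalent to the nim heap `*m`. -/
theorem stmt5 {V : Type*} (Γ : V → Finset V) (x : V) (m : ℕ) (h : HasGVal Γ x m) :
    GameEquiv Γ x (nimGraph m) (Fin.last m) := by
  obtain ⟨n₀, hn⟩ := h
  have hg : Gfun Γ n₀ x = (m : ℕ∞) := hn n₀ le_rfl
  intro X Ξ z
  have heq : (⟨m, Nat.lt_succ_self m⟩ : Fin (m+1)) = Fin.last m := rfl
  have hg' : Gfun Γ n₀ x = (((Fin.last m : Fin (m+1)) : ℕ) : ℕ∞) := by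
    rw [Fin.val_last]; exact hg
  have hP : (x, z) ∈ PPos (sumGraph Γ Ξ) ↔
      (Fin.last m, z) ∈ PPos (sumGraph (nimGraph m) Ξ) := by
    constructor
    · intro hp
      obtain ⟨a, ha⟩ := Set.mem_iUnion.mp hp
      have := (keyB (a + n₀) a n₀ x m (Nat.lt_succ_self m) z le_rfl hg).2 ha
      rwa [heq] at this
    · intro hp
      obtain ⟨a, ha⟩ := Set.mem_iUnion.mp hp
      exact keyA (a + n₀) a n₀ x (Fin.last m) z le_rfl hg' ha
  have hN : (x, z) ∈ NPos (sumGraph Γ Ξ) ↔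
      (Fin.last m, z) ∈ NPos (sumGraph (nimGraph m) Ξ) := by
    constructor
    · intro hp
      obtain ⟨a, ha⟩ := Set.mem_iUnion.mp hp
      have := (keyB (a + n₀) a n₀ x m (Nat.lt_succ_self m) z le_rfl hg).1 ha
      rwa [heq] at this
    · intro hp
      obtain ⟨a, ha⟩ := Set.mem_iUnion.mp hp
      exact keyA2 hg' ha
  refine ⟨hP, hN, ?_⟩
  simp only [DPos, Set.mem_compl_iff, Set.mem_union, hP, hN]
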